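/- Let f : ℝ → ℝ≥0 be non-increasing on [q_min, ∞) and such that t ↦ t f(t) is integrable on [q_min, ∞), and let b > 0. Then for q ≥ q_min + √2·b, Σ_{(m,n) ∈ (ℕ∖{0})², ‖b(m,n)‖ ≥ q} f(‖b(m,n)‖) ≤ (π/(2b²)) ∫_{q−√2 b}^{∞} t f(t) dt, by comparing each lattice point value with the average of f(|·|) over the square cell of side b having that lattice point as its farthest vertex from the origin. -/

import Mathlib

open MeasureTheory
open scoped ENNReal

section LatticeTailAux

open Real Set

private theorem my_lintegral_comp_polarCoord_symm (g : ℝ × ℝ → ℝ≥0∞) :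
    (∫⁻ p in polarCoord.target, ENNReal.ofReal p.1 * g (polarCoord.symm p)) = ∫⁻ p, g p := by
  set B : ℝ × ℝ → ℝ × ℝ →L[ℝ] ℝ × ℝ := fun p =>
    LinearMap.toContinuousLinearMap (Matrix.toLin (Module.Basis.finTwoProd ℝ) (Module.Basis.finTwoProd ℝ)
      !![cos p.2, -p.1 * sin p.2; sin p.2, p.1 * cos p.2])
  have A : ∀ p ∈ polarCoord.target, HasFDerivWithinAt polarCoord.symm (B p) polarCoord.target p :=
    fun p _ => (hasFDerivAt_polarCoord_symm p).hasFDerivWithinAt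
  have B_det : ∀ p, (B p).det = p.1 := by
    intro p
    conv_rhs => rw [← one_mul p.1, ← cos_sq_add_sin_sq p.2]
    simp only [B, neg_mul, LinearMap.det_toContinuousLinearMap, LinearMap.det_toLin,
      Matrix.det_fin_two_of, sub_neg_eq_add]
    ring
  symm
  calc
    ∫⁻ p, g p = ∫⁻ p in polarCoord.source, g p := by
      rw [← setLIntegral_univ]
      exact setLIntegral_congr polarCoord_source_ae_eq_univ.symm
    _ = ∫⁻ p in polarCoord.symm '' polarCoord.target, g p := by
      rw [polarCoord.symm_image_target_eq_source]
    _ = ∫⁻ p in polarCoord.target, ENNReal.ofReal |(B p).det| * g (polarCoord.symm p) :=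
      lintegral_image_eq_lintegral_abs_det_fderiv_mul volume
        polarCoord.open_target.measurableSet A polarCoord.symm.injOn g
    _ = ∫⁻ p in polarCoord.target, ENNReal.ofReal p.1 * g (polarCoord.symm p) := by
      refine setLIntegral_congr_fun polarCoord.open_target.measurableSet
        (fun x hx => ?_)
      rw [B_det, abs_of_pos hx.1]

private theorem my_quad_integral (r : ℝ) (h : ℝ → ℝ≥0∞) (hh : Measurable h) :
    (∫⁻ x : ℝ × ℝ, {x : ℝ × ℝ | r ≤ Real.sqrt (x.1 ^ 2 + x.2 ^ 2) ∧ 0 < x.1 ∧ 0 < x.2}.indicator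
      (fun x => h (Real.sqrt (x.1 ^ 2 + x.2 ^ 2))) x)
      ≤ ENNReal.ofReal (π / 2) * ∫⁻ t in Ici r, ENNReal.ofReal t * h t := by
  set A : Set (ℝ × ℝ) := {x : ℝ × ℝ | r ≤ Real.sqrt (x.1 ^ 2 + x.2 ^ 2) ∧ 0 < x.1 ∧ 0 < x.2}
  rw [← my_lintegral_comp_polarCoord_symm]
  have hsymm : ∀ p : ℝ × ℝ, polarCoord.symm p = (p.1 * Real.cos p.2, p.1 * Real.sin p.2) :=
    fun _ => rfl
  set g₁ : ℝ → ℝ≥0∞ := (Ici r).indicator (fun t => ENNReal.ofReal t * h t) with hg₁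
  set g₂ : ℝ → ℝ≥0∞ := (Ioo 0 (π / 2)).indicator 1 with hg₂
  have key : ∀ p ∈ polarCoord.target,
      ENNReal.ofReal p.1 * A.indicator
        (fun x => h (Real.sqrt (x.1 ^ 2 + x.2 ^ 2))) (polarCoord.symm p) = g₁ p.1 * g₂ p.2 := by
    rintro ⟨t, θ⟩ ⟨ht, hθ⟩
    simp only [mem_Ioi] at ht
    simp only [mem_Ioo] at hθ
    have hρ : Real.sqrt ((t * Real.cos θ) ^ 2 + (t * Real.sin θ) ^ 2) = t := by
      have : (t * Real.cos θ) ^ 2 + (t * Real.sin θ) ^ 2 = t ^ 2 := by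
        have := Real.sin_sq_add_cos_sq θ; nlinarith
      rw [this, Real.sqrt_sq ht.le]
    have hmem : polarCoord.symm (t, θ) ∈ A ↔ r ≤ t ∧ θ ∈ Ioo 0 (π / 2) := by
      rw [hsymm]
      simp only [A, mem_setOf_eq, hρ, mem_Ioo]
      constructor
      · rintro ⟨h1, h2, h3⟩
        have hc : 0 < Real.cos θ := by by_contra hcon; push_neg at hcon; nlinarith
        have hs : 0 < Real.sin θ := by by_contra hcon; push_neg at hcon; nlinarith
        refine ⟨h1, ?_, ?_⟩
        · by_contra hcon; push_neg at hcon
          exact absurd hs (not_lt.2 (Real.sin_nonpos_of_nonpos_of_neg_pi_le hcon hθ.1.le))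
        · by_contra hcon; push_neg at hcon
          exact absurd hc (not_lt.2 (Real.cos_nonpos_of_pi_div_two_le_of_le hcon
            (by linarith [Real.pi_pos])))
      · rintro ⟨h1, h2, h3⟩
        refine ⟨h1, mul_pos ht ?_, mul_pos ht ?_⟩
        · exact Real.cos_pos_of_mem_Ioo ⟨by linarith [Real.pi_pos], h3⟩
        · exact Real.sin_pos_of_pos_of_lt_pi h2 (by linarith [Real.pi_pos])
    by_cases h1 : r ≤ t
    · by_cases h2 : θ ∈ Ioo 0 (π / 2)
      · rw [Set.indicator_of_mem (hmem.2 ⟨h1, h2⟩)]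
        rw [show g₁ (t, θ).1 = ENNReal.ofReal t * h t from Set.indicator_of_mem h1 _,
          show g₂ (t, θ).2 = 1 from Set.indicator_of_mem h2 _]
        rw [hsymm]
        simp [hρ]
      · rw [Set.indicator_of_notMem (fun hm => h2 (hmem.1 hm).2),
          show g₂ (t, θ).2 = 0 from Set.indicator_of_notMem h2 _]
        simp
    · rw [Set.indicator_of_notMem (fun hm => h1 (hmem.1 hm).1),
        show g₁ (t, θ).1 = 0 from Set.indicator_of_notMem h1 _]
      simp
  rw [setLIntegral_congr_fun polarCoord.open_target.measurableSet
    key]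
  have hg₁m : Measurable g₁ :=
    (ENNReal.measurable_ofReal.comp measurable_id |>.mul hh).indicator measurableSet_Ici
  have hg₂m : Measurable g₂ := measurable_const.indicator measurableSet_Ioo
  have htarget : (polarCoord.target : Set (ℝ × ℝ)) = Ioi (0 : ℝ) ×ˢ Ioo (-π) π := rfl
  rw [htarget]
  have hrestr : (volume : Measure (ℝ × ℝ)).restrict (Ioi (0 : ℝ) ×ˢ Ioo (-π) π)
      = (volume.restrict (Ioi (0 : ℝ))).prod (volume.restrict (Ioo (-π) π)) := by
    rw [Measure.volume_eq_prod, Measure.prod_restrict]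
  rw [hrestr, lintegral_prod_mul hg₁m.aemeasurable hg₂m.aemeasurable]
  have hθint : (∫⁻ θ in Ioo (-π) π, g₂ θ) = ENNReal.ofReal (π / 2) := by
    rw [hg₂, lintegral_indicator measurableSet_Ioo]
    simp only [Pi.one_apply]
    rw [setLIntegral_one, Measure.restrict_apply measurableSet_Ioo]
    have hsub : Ioo (0:ℝ) (π / 2) ⊆ Ioo (-π) π := fun x hx => by
      simp only [mem_Ioo] at hx ⊢
      constructor <;> linarith [Real.pi_pos]
    rw [Set.inter_eq_left.2 hsub]
    simp [Real.volume_Ioo]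
  have htint : (∫⁻ t in Ioi 0, g₁ t) ≤ ∫⁻ t in Ici r, ENNReal.ofReal t * h t := by
    rw [hg₁, lintegral_indicator measurableSet_Ici, Measure.restrict_restrict measurableSet_Ici]
    exact lintegral_mono' (Measure.restrict_mono inter_subset_left le_rfl) le_rfl
  rw [hθint, mul_comm]
  exact mul_le_mul_right htint _

private theorem my_sqrt_tri (u v : ℝ) (hu : 0 ≤ u) (hv : 0 ≤ v) :
    Real.sqrt ((u + 1) ^ 2 + (v + 1) ^ 2) ≤ Real.sqrt (u ^ 2 + v ^ 2) + Real.sqrt 2 := by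
  have h1 : Real.sqrt (u ^ 2 + v ^ 2) ^ 2 = u ^ 2 + v ^ 2 := Real.sq_sqrt (by positivity)
  have h2 : Real.sqrt 2 ^ 2 = 2 := Real.sq_sqrt (by norm_num)
  have hs : u + v ≤ Real.sqrt 2 * Real.sqrt (u ^ 2 + v ^ 2) := by
    rw [← Real.sqrt_mul (by norm_num)]
    exact Real.le_sqrt_of_sq_le (by nlinarith [sq_nonneg (u - v)])
  have hbound : (u + 1) ^ 2 + (v + 1) ^ 2
      ≤ (Real.sqrt (u ^ 2 + v ^ 2) + Real.sqrt 2) ^ 2 := by nlinarith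
  calc Real.sqrt ((u + 1) ^ 2 + (v + 1) ^ 2)
      ≤ Real.sqrt ((Real.sqrt (u ^ 2 + v ^ 2) + Real.sqrt 2) ^ 2) := Real.sqrt_le_sqrt hbound
    _ = Real.sqrt (u ^ 2 + v ^ 2) + Real.sqrt 2 :=
        Real.sqrt_sq (by positivity)

end LatticeTailAux

set_option maxHeartbeats 2000000 in
/-- **Two-dimensional quarter-lattice tail-sum bound.** Let `f : ℝ → ℝ` be nonnegative,
non-increasing on `[q_min, ∞)` with `t ↦ t f t` integrable there, and let `b > 0`.  Then
for `q ≥ q_min + √2 b`, the tail sum over the positive-quadrant lattice points satisfies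
`Σ_{(m,n) ∈ (ℕ∖{0})², b√(m²+n²) ≥ q} f(b√(m²+n²)) ≤ (π/(2b²)) ∫_{q−√2 b}^{∞} t f(t) dt`. -/
theorem lattice_tail_sum_two_dim
    (f : ℝ → ℝ) (hf_nonneg : ∀ t, 0 ≤ f t)
    (qmin : ℝ) (hqmin : 0 ≤ qmin)
    (hf_anti : AntitoneOn f (Set.Ici qmin))
    (hf_int : IntegrableOn (fun t => t * f t) (Set.Ici qmin))
    (b : ℝ) (hb : 0 < b) (q : ℝ) (hq : qmin + Real.sqrt 2 * b ≤ q) :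
    (∑' p : {p : ℕ × ℕ // 1 ≤ p.1 ∧ 1 ≤ p.2 ∧
        q ≤ b * Real.sqrt ((p.1 : ℝ) ^ 2 + (p.2 : ℝ) ^ 2)},
      f (b * Real.sqrt (((p : ℕ × ℕ).1 : ℝ) ^ 2 + ((p : ℕ × ℕ).2 : ℝ) ^ 2))) ≤
      (Real.pi / (2 * b ^ 2)) * ∫ t in Set.Ici (q - Real.sqrt 2 * b), t * f t := by
  classical
  set r : ℝ := q - Real.sqrt 2 * b with hrdef
  have hsqrt2b : 0 ≤ Real.sqrt 2 * b := mul_nonneg (Real.sqrt_nonneg 2) hb.le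
  have hqminr : qmin ≤ r := by simp only [hrdef]; linarith
  have hr0 : 0 ≤ r := hqmin.trans hqminr
  have hqminq : qmin ≤ q := by linarith
  -- the globally antitone modification of f
  set f' : ℝ → ℝ := fun t => f (max t qmin) with hf'def
  have hf'eq : ∀ t, qmin ≤ t → f' t = f t := fun t ht => by
    simp only [hf'def, max_eq_left ht]
  have hf'anti : Antitone f' := fun s t hst =>
    hf_anti (Set.mem_Ici.2 (le_max_right _ _)) (Set.mem_Ici.2 (le_max_right _ _))
      (max_le_max hst le_rfl)
  have hf'meas : Measurable f' := hf'anti.measurable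
  have hf'nn : ∀ t, 0 ≤ f' t := fun t => hf_nonneg _
  -- notation
  set S := {p : ℕ × ℕ // 1 ≤ p.1 ∧ 1 ≤ p.2 ∧
      q ≤ b * Real.sqrt ((p.1 : ℝ) ^ 2 + (p.2 : ℝ) ^ 2)} with hSdef
  set R : S → ℝ := fun p =>
    b * Real.sqrt (((p : ℕ × ℕ).1 : ℝ) ^ 2 + ((p : ℕ × ℕ).2 : ℝ) ^ 2) with hRdef
  set A : Set (ℝ × ℝ) :=
    {x : ℝ × ℝ | r ≤ Real.sqrt (x.1 ^ 2 + x.2 ^ 2) ∧ 0 < x.1 ∧ 0 < x.2} with hAdef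
  set Φ : ℝ × ℝ → ℝ≥0∞ :=
    A.indicator (fun x => ENNReal.ofReal (f' (Real.sqrt (x.1 ^ 2 + x.2 ^ 2)))) with hΦdef
  set cell : S → Set (ℝ × ℝ) := fun p =>
    Set.Ioc (b * (((p : ℕ × ℕ).1 : ℝ) - 1)) (b * ((p : ℕ × ℕ).1 : ℝ)) ×ˢ
    Set.Ioc (b * (((p : ℕ × ℕ).2 : ℝ) - 1)) (b * ((p : ℕ × ℕ).2 : ℝ)) with hcelldef
  have hcellmeas : ∀ p : S, MeasurableSet (cell p) := fun p =>
    (measurableSet_Ioc.prod measurableSet_Ioc)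
  have hcellvol : ∀ p : S, volume (cell p) = ENNReal.ofReal b * ENNReal.ofReal b := by
    intro p
    rw [hcelldef]
    rw [show (volume : Measure (ℝ × ℝ)) = (volume : Measure ℝ).prod volume from
      Measure.volume_eq_prod ℝ ℝ, Measure.prod_prod, Real.volume_Ioc, Real.volume_Ioc]
    congr 1 <;> ring_nf
  -- pointwise bound on each cell
  have cell_bound : ∀ p : S,
      ENNReal.ofReal (f (R p)) * (ENNReal.ofReal b * ENNReal.ofReal b)
        ≤ ∫⁻ x in cell p, Φ x := by
    intro p
    obtain ⟨⟨m, n⟩, hm, hn, hqR⟩ := p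
    set p' : S := ⟨(m, n), hm, hn, hqR⟩
    have hm1 : (1 : ℝ) ≤ (m : ℝ) := by exact_mod_cast hm
    have hn1 : (1 : ℝ) ≤ (n : ℝ) := by exact_mod_cast hn
    have hRval : R p' = b * Real.sqrt ((m : ℝ) ^ 2 + (n : ℝ) ^ 2) := rfl
    have hpt : ∀ x ∈ cell p', ENNReal.ofReal (f (R p')) ≤ Φ x := by
      rintro ⟨x₁, x₂⟩ hx
      simp only [hcelldef, Set.mem_prod, Set.mem_Ioc] at hx
      obtain ⟨⟨hx1l, hx1u⟩, ⟨hx2l, hx2u⟩⟩ := hx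
      have hx1pos : 0 < x₁ := lt_of_le_of_lt (by nlinarith) hx1l
      have hx2pos : 0 < x₂ := lt_of_le_of_lt (by nlinarith) hx2l
      have hρup : Real.sqrt (x₁ ^ 2 + x₂ ^ 2) ≤ R p' := by
        rw [hRval, show b * Real.sqrt ((m : ℝ) ^ 2 + (n : ℝ) ^ 2)
            = Real.sqrt ((b * (m : ℝ)) ^ 2 + (b * (n : ℝ)) ^ 2) by
          rw [show (b * (m : ℝ)) ^ 2 + (b * (n : ℝ)) ^ 2
              = b ^ 2 * ((m : ℝ) ^ 2 + (n : ℝ) ^ 2) by ring,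
            Real.sqrt_mul (sq_nonneg b), Real.sqrt_sq hb.le]]
        exact Real.sqrt_le_sqrt (by nlinarith)
      have hρlow : r ≤ Real.sqrt (x₁ ^ 2 + x₂ ^ 2) := by
        have h1 : Real.sqrt ((b * ((m : ℝ) - 1)) ^ 2 + (b * ((n : ℝ) - 1)) ^ 2)
            ≤ Real.sqrt (x₁ ^ 2 + x₂ ^ 2) := by
          apply Real.sqrt_le_sqrt
          have hb1 : 0 ≤ b * ((m : ℝ) - 1) := by nlinarith
          have hb2 : 0 ≤ b * ((n : ℝ) - 1) := by nlinarith
          nlinarith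
        have h2 : Real.sqrt ((b * ((m : ℝ) - 1)) ^ 2 + (b * ((n : ℝ) - 1)) ^ 2)
            = b * Real.sqrt (((m : ℝ) - 1) ^ 2 + ((n : ℝ) - 1) ^ 2) := by
          rw [show (b * ((m : ℝ) - 1)) ^ 2 + (b * ((n : ℝ) - 1)) ^ 2
              = b ^ 2 * (((m : ℝ) - 1) ^ 2 + ((n : ℝ) - 1) ^ 2) by ring,
            Real.sqrt_mul (sq_nonneg b), Real.sqrt_sq hb.le]
        have h3 : Real.sqrt ((m : ℝ) ^ 2 + (n : ℝ) ^ 2)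
            ≤ Real.sqrt (((m : ℝ) - 1) ^ 2 + ((n : ℝ) - 1) ^ 2) + Real.sqrt 2 := by
          have := my_sqrt_tri ((m : ℝ) - 1) ((n : ℝ) - 1) (by linarith) (by linarith)
          simpa using this
        have h4 : r ≤ b * Real.sqrt (((m : ℝ) - 1) ^ 2 + ((n : ℝ) - 1) ^ 2) := by
          have := mul_le_mul_of_nonneg_left h3 hb.le
          have hq' : q ≤ b * Real.sqrt ((m : ℝ) ^ 2 + (n : ℝ) ^ 2) := hqR
          simp only [hrdef]
          nlinarith
        linarith [h1, h2 ▸ h1]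
      have hmemA : ((x₁, x₂) : ℝ × ℝ) ∈ A := ⟨hρlow, hx1pos, hx2pos⟩
      rw [hΦdef, Set.indicator_of_mem hmemA]
      apply ENNReal.ofReal_le_ofReal
      rw [hf'eq _ (hqminr.trans hρlow)]
      exact hf_anti (Set.mem_Ici.2 (hqminr.trans hρlow))
        (Set.mem_Ici.2 (hqminq.trans hqR)) hρup
    calc ENNReal.ofReal (f (R p')) * (ENNReal.ofReal b * ENNReal.ofReal b)
        = ∫⁻ _ in cell p', ENNReal.ofReal (f (R p')) := by
          rw [setLIntegral_const, hcellvol]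
      _ ≤ ∫⁻ x in cell p', Φ x := setLIntegral_mono' (hcellmeas p') hpt
  -- cells are pairwise disjoint
  have hIoc : ∀ (k l : ℕ), k ≠ l →
      Disjoint (Set.Ioc (b * ((k : ℝ) - 1)) (b * (k : ℝ)))
        (Set.Ioc (b * ((l : ℝ) - 1)) (b * (l : ℝ))) := by
    intro k l hkl
    rw [Set.disjoint_left]
    rintro x ⟨hx1, hx2⟩ ⟨hy1, hy2⟩
    rcases lt_or_gt_of_ne hkl with h | h
    · have h' : k + 1 ≤ l := h
      have : (k : ℝ) ≤ (l : ℝ) - 1 := by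
        have hc := (Nat.cast_le (α := ℝ)).mpr h'
        push_cast at hc; linarith
      nlinarith
    · have h' : l + 1 ≤ k := h
      have : (l : ℝ) ≤ (k : ℝ) - 1 := by
        have hc := (Nat.cast_le (α := ℝ)).mpr h'
        push_cast at hc; linarith
      nlinarith
  have hdisj : Pairwise (Function.onFun Disjoint cell) := by
    intro p p' hne
    have hval : (p : ℕ × ℕ) ≠ (p' : ℕ × ℕ) := fun h => hne (Subtype.ext h)
    have : (p : ℕ × ℕ).1 ≠ (p' : ℕ × ℕ).1 ∨ (p : ℕ × ℕ).2 ≠ (p' : ℕ × ℕ).2 := by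
      by_contra hcon
      push_neg at hcon
      exact hval (Prod.ext hcon.1 hcon.2)
    rcases this with h | h
    · show Disjoint (cell p) (cell p')
      rw [Set.disjoint_left]
      rintro x hx hx'
      exact Set.disjoint_left.1 (hIoc _ _ h) hx.1 hx'.1
    · show Disjoint (cell p) (cell p')
      rw [Set.disjoint_left]
      rintro x hx hx'
      exact Set.disjoint_left.1 (hIoc _ _ h) hx.2 hx'.2
  -- master inequality in ℝ≥0∞
  have hInt : IntegrableOn (fun t => t * f t) (Set.Ici r) :=
    hf_int.mono_set (Set.Ici_subset_Ici.2 hqminr)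
  have hJnn : 0 ≤ ∫ t in Set.Ici r, t * f t :=
    setIntegral_nonneg measurableSet_Ici fun t ht =>
      mul_nonneg (hr0.trans ht) (hf_nonneg t)
  have hofReal : ENNReal.ofReal (∫ t in Set.Ici r, t * f t)
      = ∫⁻ t in Set.Ici r, ENNReal.ofReal (t * f t) := by
    apply ofReal_integral_eq_lintegral_ofReal hInt
    rw [Filter.EventuallyLE, ae_restrict_iff' measurableSet_Ici]
    exact Filter.Eventually.of_forall fun t ht =>
      mul_nonneg (hr0.trans ht) (hf_nonneg t)
  have hcongr : (∫⁻ t in Set.Ici r, ENNReal.ofReal t * ENNReal.ofReal (f' t))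
      = ∫⁻ t in Set.Ici r, ENNReal.ofReal (t * f t) := by
    refine setLIntegral_congr_fun measurableSet_Ici
      (fun t ht => ?_)
    rw [← ENNReal.ofReal_mul (hr0.trans ht), hf'eq _ (hqminr.trans ht)]
  have master : (∑' p : S, ENNReal.ofReal (f (R p))) * (ENNReal.ofReal b * ENNReal.ofReal b)
      ≤ ENNReal.ofReal (Real.pi / 2) * ENNReal.ofReal (∫ t in Set.Ici r, t * f t) := by
    rw [← ENNReal.tsum_mul_right]
    calc (∑' p : S, ENNReal.ofReal (f (R p)) * (ENNReal.ofReal b * ENNReal.ofReal b))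
        ≤ ∑' p : S, ∫⁻ x in cell p, Φ x := ENNReal.tsum_le_tsum cell_bound
      _ = ∫⁻ x in ⋃ p : S, cell p, Φ x := (lintegral_iUnion hcellmeas hdisj Φ).symm
      _ ≤ ∫⁻ x, Φ x := setLIntegral_le_lintegral _ _
      _ ≤ ENNReal.ofReal (Real.pi / 2)
          * ∫⁻ t in Set.Ici r, ENNReal.ofReal t * ENNReal.ofReal (f' t) := by
          exact my_quad_integral r (fun t => ENNReal.ofReal (f' t))
            (ENNReal.measurable_ofReal.comp hf'meas)
      _ = ENNReal.ofReal (Real.pi / 2) * ENNReal.ofReal (∫ t in Set.Ici r, t * f t) := by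
          rw [hcongr, hofReal]
  -- conversion back to real numbers
  set T : ℝ≥0∞ := ∑' p : S, ENNReal.ofReal (f (R p)) with hTdef
  have hbb0 : (ENNReal.ofReal b * ENNReal.ofReal b) ≠ 0 := by
    simp [ENNReal.ofReal_eq_zero, not_le, hb]
  have hbbtop : (ENNReal.ofReal b * ENNReal.ofReal b) ≠ ⊤ := by
    simp [ENNReal.mul_eq_top]
  have hT : T ≤ ENNReal.ofReal (Real.pi / 2) * ENNReal.ofReal (∫ t in Set.Ici r, t * f t)
      / (ENNReal.ofReal b * ENNReal.ofReal b) := by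
    rw [ENNReal.le_div_iff_mul_le (Or.inl hbb0) (Or.inl hbbtop)]
    exact master
  have hRHSne : ENNReal.ofReal (Real.pi / 2) * ENNReal.ofReal (∫ t in Set.Ici r, t * f t)
      / (ENNReal.ofReal b * ENNReal.ofReal b) ≠ ⊤ := by
    exact (ENNReal.div_lt_top
      (ENNReal.mul_ne_top ENNReal.ofReal_ne_top ENNReal.ofReal_ne_top) hbb0).ne
  have hTne : T ≠ ⊤ := ne_top_of_le_ne_top hRHSne hT
  have htsum_eq : (∑' p : S, f (R p)) = T.toReal := by
    rw [hTdef, ENNReal.tsum_toReal_eq (fun p => ENNReal.ofReal_ne_top)]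
    exact tsum_congr fun p => (ENNReal.toReal_ofReal (hf_nonneg _)).symm
  have hfinal : T.toReal ≤ (Real.pi / (2 * b ^ 2)) * ∫ t in Set.Ici r, t * f t := by
    have := ENNReal.toReal_mono hRHSne hT
    rw [ENNReal.toReal_div, ENNReal.toReal_mul, ENNReal.toReal_ofReal (by positivity),
      ENNReal.toReal_mul, ENNReal.toReal_ofReal hb.le, ENNReal.toReal_ofReal hJnn] at this
    calc T.toReal ≤ Real.pi / 2 * (∫ t in Set.Ici r, t * f t) / (b * b) := this
      _ = Real.pi * (∫ t in Set.Ici r, t * f t) / (2 * (b * b)) := by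
          rw [div_mul_eq_mul_div, div_div]
      _ = (Real.pi / (2 * b ^ 2)) * ∫ t in Set.Ici r, t * f t := by
          rw [div_mul_eq_mul_div]
          congr 1
          ring
  calc (∑' p : S, f (R p)) = T.toReal := htsum_eq
    _ ≤ (Real.pi / (2 * b ^ 2)) * ∫ t in Set.Ici r, t * f t := hfinal
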